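/- Let F be a field, r, s ≥ 1, and t ≤ r + s + 1. Inside the affine space of quadruples (A, C, B, D) where A, C range over polynomials of degree ≤ r and B, D over polynomials of degree ≤ s in a variable Z (an affine space of dimension 2r + 2s + 4 over F), consider the closed subset M = {(A, C, B, D) : A·B ≡ C·D mod Z^t}. Then the codimension of M in this affine space is at least min{2r + 2, 2s + 2, t}, i.e. dim M ≤ 2r + 2s + 4 − min{2r + 2, 2s + 2, t}. -/

import Mathlib

set_option maxHeartbeats 1000000
set_option synthInstance.maxHeartbeats 400000


/-- The variable set for Lemma 5.6: coefficients of `A`, `C` (degree `≤ r`) and of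
`B`, `D` (degree `≤ s`). -/
def BMVars (r s : ℕ) : Type := (Fin (r + 1) ⊕ Fin (r + 1)) ⊕ (Fin (s + 1) ⊕ Fin (s + 1))

/-- The generic polynomial of degree `≤ n` in `Z` with coefficients the variables
selected by `sel`. -/
noncomputable def genPoly (F : Type) [Field F] (r s n : ℕ) (sel : Fin (n + 1) → BMVars r s) :
    Polynomial (MvPolynomial (BMVars r s) F) :=
  ∑ i : Fin (n + 1), Polynomial.C (MvPolynomial.X (sel i)) * Polynomial.X ^ (i : ℕ)


namespace Stmt18
open MvPolynomial

open MvPolynomial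

variable {F : Type} [Field F]

/-- `y` is algebraically dependent over `F`. -/
def Dep (F : Type) [Field F] {A : Type} [CommRing A] [Algebra F A] {m : ℕ} (y : Fin m → A) : Prop :=
  ∃ p : MvPolynomial (Fin m) F, p ≠ 0 ∧ MvPolynomial.aeval y p = 0

lemma drop_aux {A : Type} [CommRing A] [IsDomain A] [Algebra F A] {m : ℕ}
    (P : Ideal A) [P.IsPrime] (f : A) (hf : f ∈ P) (hf0 : f ≠ 0)
    (z : Fin m → A)
    (hz : ¬ Dep F (fun i => Ideal.Quotient.mk P (z i))) :
    ∀ (n : ℕ) (Q : Polynomial (MvPolynomial (Fin m) F)), Q.natDegree ≤ n → Q ≠ 0 →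
      Polynomial.eval₂ (MvPolynomial.aeval z).toRingHom f Q = 0 → False := by
  have key : ∀ (Q : Polynomial (MvPolynomial (Fin m) F)), Q.coeff 0 ≠ 0 →
      Polynomial.eval₂ (MvPolynomial.aeval z).toRingHom f Q = 0 → False := by
    intro Q h0 hQ
    apply hz
    refine ⟨Q.coeff 0, h0, ?_⟩
    have := congrArg (Ideal.Quotient.mk P) hQ
    rw [Polynomial.hom_eval₂, map_zero] at this
    rw [show Ideal.Quotient.mk P f = 0 from Ideal.Quotient.eq_zero_iff_mem.mpr hf,
      Polynomial.eval₂_at_zero] at this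
    rw [← this]
    have hcomp : (Ideal.Quotient.mkₐ F P).comp (MvPolynomial.aeval z)
        = MvPolynomial.aeval (fun i => Ideal.Quotient.mk P (z i)) := by
      rw [MvPolynomial.comp_aeval]
      rfl
    calc MvPolynomial.aeval (fun i => Ideal.Quotient.mk P (z i)) (Q.coeff 0)
        = ((Ideal.Quotient.mkₐ F P).comp (MvPolynomial.aeval z)) (Q.coeff 0) := by rw [hcomp]
      _ = ((Ideal.Quotient.mk P).comp (MvPolynomial.aeval z).toRingHom) (Q.coeff 0) := rfl
  intro n
  induction n with
  | zero =>
    intro Q hdeg hQ0 hev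
    by_cases h0 : Q.coeff 0 = 0
    · obtain ⟨Q₁, rfl⟩ := Polynomial.X_dvd_iff.mpr h0
      have hQ₁ : Q₁ ≠ 0 := by rintro rfl; simp at hQ0
      have : (Polynomial.X * Q₁).natDegree = 1 + Q₁.natDegree :=
        Polynomial.natDegree_mul Polynomial.X_ne_zero hQ₁ |>.trans (by simp)
      omega
    · exact key Q h0 hev
  | succ n ih =>
    intro Q hdeg hQ0 hev
    by_cases h0 : Q.coeff 0 = 0
    · obtain ⟨Q₁, rfl⟩ := Polynomial.X_dvd_iff.mpr h0
      have hQ₁ : Q₁ ≠ 0 := by rintro rfl; simp at hQ0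
      have hdeg' : Q₁.natDegree ≤ n := by
        have : (Polynomial.X * Q₁).natDegree = 1 + Q₁.natDegree :=
          Polynomial.natDegree_mul Polynomial.X_ne_zero hQ₁ |>.trans (by simp)
        omega
      rw [Polynomial.eval₂_mul, Polynomial.eval₂_X] at hev
      rcases mul_eq_zero.mp hev with h | h
      · exact hf0 h
      · exact ih Q₁ hdeg' hQ₁ h
    · exact key Q h0 hev

lemma drop {A : Type} [CommRing A] [IsDomain A] [Algebra F A] {m : ℕ}
    (P : Ideal A) [P.IsPrime] (f : A) (hf : f ∈ P) (hf0 : f ≠ 0)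
    (z : Fin m → A)
    (hz : ¬ Dep F (fun i => Ideal.Quotient.mk P (z i))) :
    ¬ Dep F (Fin.cons f z) := by
  rintro ⟨p, hp0, hpe⟩
  set E : Polynomial (MvPolynomial (Fin m) F) →ₐ[F] A :=
    Polynomial.eval₂AlgHom (MvPolynomial.aeval z) f (fun a => mul_comm _ _) with hE
  have hEQ : ∀ a, E a = Polynomial.eval₂ (MvPolynomial.aeval z).toRingHom f a := fun _ => rfl
  have hcomp : (E.comp (MvPolynomial.finSuccEquiv F m : MvPolynomial (Fin (m+1)) F →ₐ[F] _))
      = MvPolynomial.aeval (Fin.cons f z) := by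
    apply MvPolynomial.algHom_ext
    intro i
    refine Fin.cases ?_ ?_ i
    · simp [hEQ, MvPolynomial.finSuccEquiv_X_zero]
    · intro j
      simp [hEQ, MvPolynomial.finSuccEquiv_X_succ]
  have hev : E (MvPolynomial.finSuccEquiv F m p) = 0 := by
    have := congrFun (congrArg (fun (g : MvPolynomial (Fin (m+1)) F →ₐ[F] A) => g.toFun) hcomp) p
    simpa using this.trans hpe
  have hQ0 : MvPolynomial.finSuccEquiv F m p ≠ 0 := by
    intro h
    exact hp0 ((map_eq_zero_iff _ (AlgEquiv.injective _)).mp h)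
  exact drop_aux P f hf hf0 z hz _ (MvPolynomial.finSuccEquiv F m p) le_rfl hQ0 (by rw [← hEQ]; exact hev)

lemma chain_indep : ∀ (l : ℕ) (A : Type) (_ : CommRing A) (_ : IsDomain A) (_ : Algebra F A)
    (P : Fin (l+1) → Ideal A), StrictMono P → (∀ i, (P i).IsPrime) → P 0 = ⊥ →
    ∃ y : Fin l → A, ¬ Dep F y := by
  intro l
  induction l with
  | zero =>
    intro A _ _ _ P _ _ _
    refine ⟨Fin.elim0, ?_⟩
    rintro ⟨p, hp0, hpe⟩
    have : MvPolynomial.aeval (Fin.elim0 : Fin 0 → A)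
        = (Algebra.ofId F A).comp ((MvPolynomial.isEmptyAlgEquiv F (Fin 0)) : MvPolynomial (Fin 0) F →ₐ[F] F) := by
      apply MvPolynomial.algHom_ext
      exact fun i => i.elim0
    rw [this] at hpe
    simp only [AlgHom.comp_apply] at hpe
    have h1 : ((MvPolynomial.isEmptyAlgEquiv F (Fin 0)) p) = 0 := by
      have : Function.Injective (Algebra.ofId F A) := RingHom.injective _
      exact this (by simpa using hpe)
    exact hp0 ((map_eq_zero_iff _ (AlgEquiv.injective _)).mp h1)
  | succ l ih =>
    intro A _ _ _ P hmono hprime hbot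
    have h01 : P 0 < P 1 := hmono (by simp [Fin.lt_def])
    obtain ⟨f, hf1, hf0'⟩ := SetLike.exists_of_lt h01
    have hf0 : f ≠ 0 := by rwa [hbot, Ideal.mem_bot] at hf0'
    haveI : (P 1).IsPrime := hprime 1
    let A' := A ⧸ (P 1)
    haveI : IsDomain A' := Ideal.Quotient.isDomain (P 1)
    have hker : RingHom.ker (Ideal.Quotient.mk (P 1)) = P 1 := Ideal.mk_ker
    have hle : ∀ i : Fin (l+1), P 1 ≤ P i.succ := by
      intro i
      apply hmono.monotone
      rw [Fin.le_def]
      simpa using Nat.succ_le_succ (Nat.zero_le _)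
    let P' : Fin (l+1) → Ideal A' := fun i => (P i.succ).map (Ideal.Quotient.mk (P 1))
    have hcomap : ∀ i, Ideal.comap (Ideal.Quotient.mk (P 1)) (P' i) = P i.succ := by
      intro i
      rw [Ideal.comap_map_of_surjective _ Ideal.Quotient.mk_surjective]
      rw [← RingHom.ker_eq_comap_bot, hker]
      exact sup_eq_left.mpr (hle i)
    have hmono' : StrictMono P' := by
      intro i j hij
      refine lt_of_le_of_ne (Ideal.map_mono (hmono.monotone (Fin.succ_le_succ_iff.mpr hij.le))) ?_
      intro h
      have := congrArg (Ideal.comap (Ideal.Quotient.mk (P 1))) h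
      rw [hcomap, hcomap] at this
      exact hij.ne (Fin.succ_injective _ (hmono.injective this))
    have hprime' : ∀ i, (P' i).IsPrime := by
      intro i
      haveI := hprime i.succ
      exact Ideal.map_isPrime_of_surjective Ideal.Quotient.mk_surjective (by rw [hker]; exact hle i)
    have hbot' : P' 0 = ⊥ := by
      have h1 : (0 : Fin (l+1)).succ = 1 := by ext; simp
      show (P (0 : Fin (l+1)).succ).map _ = ⊥
      rw [h1]
      exact Ideal.map_quotient_self (P 1)
    obtain ⟨y', hy'⟩ := ih A' inferInstance inferInstance inferInstance P' hmono' hprime' hbot'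
    choose z hzz using fun i => Ideal.Quotient.mk_surjective (y' i)
    refine ⟨Fin.cons f z, ?_⟩
    apply drop (P 1) f hf1 hf0 z
    convert hy' using 2
    funext i
    exact hzz i


open MvPolynomial

variable {F : Type} [Field F]


/-- If every polynomial of total degree ≤ n maps into the span of a set of size
`2^c * (n+1)^M`, then any `M+1` elements of `A` are algebraically dependent. -/
lemma dep_of_spanning {σ : Type} {A : Type} [CommRing A] [Algebra F A]
    (ψ : MvPolynomial σ F →ₐ[F] A) (hψ : Function.Surjective ψ) (c M : ℕ)
    (H : ∀ n : ℕ, ∃ G : Finset A, G.card ≤ 2^c * (n+1)^M ∧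
      ∀ f : MvPolynomial σ F, f.totalDegree ≤ n → ψ f ∈ Submodule.span F (G : Set A))
    (y : Fin (M + 1) → A) : Dep F y := by
  classical
  choose Y hY using fun i => hψ (y i)
  set DS : ℕ := ∑ i : Fin (M+1), (Y i).totalDegree with hDS
  set e : ℕ := 2^c * (DS+1)^M with he
  set n : ℕ := e * DS with hn
  obtain ⟨G, hGcard, hGspan⟩ := H n
  set v : (Fin (M+1) → Fin (e+1)) → A := fun α => ψ (∏ i, Y i ^ (α i : ℕ)) with hv
  have hvmem : ∀ α, v α ∈ Submodule.span F (G : Set A) := by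
    intro α
    apply hGspan
    calc (∏ i, Y i ^ (α i : ℕ)).totalDegree ≤ ∑ i, (Y i ^ (α i : ℕ)).totalDegree :=
          MvPolynomial.totalDegree_finset_prod _ _
      _ ≤ ∑ i, (α i : ℕ) * (Y i).totalDegree :=
          Finset.sum_le_sum (fun i _ => MvPolynomial.totalDegree_pow _ _)
      _ ≤ ∑ i, e * (Y i).totalDegree :=
          Finset.sum_le_sum (fun i _ => Nat.mul_le_mul_right _ (Fin.is_le _))
      _ ≤ n := le_of_eq (by rw [hn, hDS, Finset.mul_sum])
  have hnotli : ¬ LinearIndependent F v := by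
    intro hli
    have hfd : FiniteDimensional F (Submodule.span F (G : Set A)) :=
      FiniteDimensional.span_of_finite F (G : Set A).toFinite
    set v' : (Fin (M+1) → Fin (e+1)) → Submodule.span F (G : Set A) :=
      fun α => ⟨v α, hvmem α⟩ with hv'
    have hli' : LinearIndependent F v' := by
      apply LinearIndependent.of_comp (Submodule.span F (G : Set A)).subtype
      convert hli
      rfl
    have h1 : Fintype.card (Fin (M+1) → Fin (e+1)) ≤ Module.finrank F (Submodule.span F (G : Set A)) :=
      hli'.fintype_card_le_finrank
    have h2 : Module.finrank F (Submodule.span F (G : Set A)) ≤ G.card := by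
      have := finrank_span_le_card (R := F) (G : Set A)
      simpa using this
    rw [Fintype.card_fun] at h1
    simp only [Fintype.card_fin] at h1
    -- h1 : (e+1)^(M+1) ≤ finrank ≤ G.card ≤ 2^c*(n+1)^M
    have hchain : (e+1)^(M+1) ≤ 2^c * (n+1)^M := le_trans h1 (le_trans h2 hGcard)
    have hkey : (n : ℕ) + 1 ≤ (DS+1) * (e+1) := by
      rw [hn]; nlinarith [Nat.zero_le e, Nat.zero_le DS]
    have h3 : 2^c * (n+1)^M ≤ 2^c * ((DS+1) * (e+1))^M :=
      Nat.mul_le_mul_left _ (Nat.pow_le_pow_left hkey M)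
    have h4 : 2^c * ((DS+1) * (e+1))^M = e * (e+1)^M := by
      rw [mul_pow, he]; ring
    have h5 : (e+1)^(M+1) = (e+1) * (e+1)^M := by ring
    have hpos : 0 < (e+1)^M := Nat.pow_pos (by omega)
    have hcontra : (e+1)^(M+1) < (e+1)^(M+1) :=
      calc (e+1)^(M+1) ≤ 2^c * (n+1)^M := hchain
        _ ≤ 2^c * ((DS+1) * (e+1))^M := h3
        _ = e * (e+1)^M := h4
        _ < (e+1) * (e+1)^M := by nlinarith [hpos]
        _ = (e+1)^(M+1) := h5.symm
    exact absurd hcontra (lt_irrefl _)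
  rw [Fintype.not_linearIndependent_iff] at hnotli
  obtain ⟨g, hsum, α₀, hα₀⟩ := hnotli
  set β : (Fin (M+1) → Fin (e+1)) → (Fin (M+1) →₀ ℕ) :=
    fun α => Finsupp.equivFunOnFinite.symm (fun i => (α i : ℕ)) with hβ
  have hβinj : Function.Injective β := by
    intro α α' h
    funext i
    have := congrArg (fun (f : Fin (M+1) →₀ ℕ) => f i) h
    simp only [hβ, Finsupp.equivFunOnFinite_symm_apply_apply] at this
    exact Fin.ext this
  refine ⟨∑ α : (Fin (M+1) → Fin (e+1)), MvPolynomial.monomial (β α) (g α), ?_, ?_⟩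
  · intro h0
    have := congrArg (MvPolynomial.coeff (β α₀)) h0
    rw [MvPolynomial.coeff_sum] at this
    rw [Finset.sum_eq_single α₀] at this
    · simp [MvPolynomial.coeff_monomial] at this; exact hα₀ this
    · intro α _ hne
      rw [MvPolynomial.coeff_monomial, if_neg (fun h => hne (hβinj h))]
    · simp
  · rw [map_sum]
    rw [← hsum]
    apply Finset.sum_congr rfl
    intro α _
    rw [MvPolynomial.aeval_monomial, Algebra.smul_def]
    congr 1
    rw [Finsupp.prod_fintype _ _ (fun i => pow_zero _)]
    show _ = ψ (∏ i, Y i ^ (α i : ℕ))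
    rw [map_prod]
    apply Finset.prod_congr rfl
    intro i _
    rw [map_pow, hY]
    simp [hβ]


open MvPolynomial

instance (r s : ℕ) : Fintype (BMVars r s) :=
  inferInstanceAs (Fintype ((Fin (r + 1) ⊕ Fin (r + 1)) ⊕ (Fin (s + 1) ⊕ Fin (s + 1))))
instance (r s : ℕ) : DecidableEq (BMVars r s) :=
  inferInstanceAs (DecidableEq ((Fin (r + 1) ⊕ Fin (r + 1)) ⊕ (Fin (s + 1) ⊕ Fin (s + 1))))

lemma card_BMVars (r s : ℕ) : Fintype.card (BMVars r s) = 2*r + 2*s + 4 := by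
  show Fintype.card ((Fin (r + 1) ⊕ Fin (r + 1)) ⊕ (Fin (s + 1) ⊕ Fin (s + 1))) = _
  simp; ring

def vA (r s : ℕ) (i : ℕ) : BMVars r s := Sum.inl (Sum.inl ⟨min i r, Nat.lt_succ_of_le (min_le_right _ _)⟩)
def vC (r s : ℕ) (i : ℕ) : BMVars r s := Sum.inl (Sum.inr ⟨min i r, Nat.lt_succ_of_le (min_le_right _ _)⟩)
def vB (r s : ℕ) (j : ℕ) : BMVars r s := Sum.inr (Sum.inl ⟨min j s, Nat.lt_succ_of_le (min_le_right _ _)⟩)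
def vD (r s : ℕ) (j : ℕ) : BMVars r s := Sum.inr (Sum.inr ⟨min j s, Nat.lt_succ_of_le (min_le_right _ _)⟩)

def wt1 (r s : ℕ) : BMVars r s → ℕ
  | Sum.inl (Sum.inl i) => if r ≤ s then 4*i.val*i.val + 8*i.val + 2 else 4*i.val*i.val + 2
  | Sum.inl (Sum.inr i) => 4*i.val*i.val + 4*i.val + 1
  | Sum.inr (Sum.inl j) => if r ≤ s then 4*j.val*j.val + 2 else 4*j.val*j.val + 8*j.val + 2
  | Sum.inr (Sum.inr j) => 4*j.val*j.val + 4*j.val + 1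

lemma wt1_vA (r s i : ℕ) (hi : i ≤ r) :
    wt1 r s (vA r s i) = if r ≤ s then 4*i*i + 8*i + 2 else 4*i*i + 2 := by
  simp [vA, wt1, min_eq_left hi]
lemma wt1_vC (r s i : ℕ) (hi : i ≤ r) : wt1 r s (vC r s i) = 4*i*i + 4*i + 1 := by
  simp [vC, wt1, min_eq_left hi]
lemma wt1_vB (r s j : ℕ) (hj : j ≤ s) :
    wt1 r s (vB r s j) = if r ≤ s then 4*j*j + 2 else 4*j*j + 8*j + 2 := by
  simp [vB, wt1, min_eq_left hj]
lemma wt1_vD (r s j : ℕ) (hj : j ≤ s) : wt1 r s (vD r s j) = 4*j*j + 4*j + 1 := by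
  simp [vD, wt1, min_eq_left hj]

/-- the `p`-index of the designated term on diagonal `k`. -/
def dp (r s k : ℕ) : ℕ := if k % 2 = 0 then k/2 else if r ≤ s then (k-1)/2 else (k+1)/2

def du (r s k : ℕ) : BMVars r s := if k % 2 = 0 then vC r s (dp r s k) else vA r s (dp r s k)
def dv (r s k : ℕ) : BMVars r s := if k % 2 = 0 then vD r s (k - dp r s k) else vB r s (k - dp r s k)

lemma du_ne_dv (r s k : ℕ) : du r s k ≠ dv r s k := by
  unfold du dv
  split_ifs <;> simp [vA, vB, vC, vD] <;> intro h <;> cases h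

/-- range facts for the designated indices. -/
lemma dp_range (r s k : ℕ) (hk2r : k ≤ 2*r+1) (hk2s : k ≤ 2*s+1) (hkrs : k ≤ r+s) :
    dp r s k ≤ r ∧ k - dp r s k ≤ s ∧ dp r s k ≤ k := by
  unfold dp
  split_ifs with h1 h2 <;> omega

/-- sum of weights of the designated pair. -/
lemma wt_base (r s k : ℕ) (hk2r : k ≤ 2*r+1) (hk2s : k ≤ 2*s+1) (hkrs : k ≤ r+s) :
    wt1 r s (du r s k) + wt1 r s (dv r s k) = 2*k*k + 4*k + 2 := by
  obtain ⟨h1, h2, h3⟩ := dp_range r s k hk2r hk2s hkrs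
  unfold du dv
  by_cases hpar : k % 2 = 0
  · obtain ⟨q, rfl⟩ : ∃ q, k = 2*q := ⟨k/2, by omega⟩
    have hdp : dp r s (2*q) = q := by unfold dp; rw [if_pos hpar]; omega
    rw [if_pos hpar, if_pos hpar, hdp]
    have h4 : 2*q - q = q := by omega
    rw [h4]
    rw [wt1_vC _ _ _ (by omega), wt1_vD _ _ _ (by omega)]
    ring
  · obtain ⟨q, rfl⟩ : ∃ q, k = 2*q+1 := ⟨k/2, by omega⟩
    rw [if_neg hpar, if_neg hpar]
    by_cases hrs : r ≤ s
    · have hdp : dp r s (2*q+1) = q := by unfold dp; rw [if_neg hpar, if_pos hrs]; omega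
      rw [hdp]
      have h4 : 2*q+1 - q = q+1 := by omega
      rw [h4]
      rw [hdp] at h1 h2
      rw [wt1_vA _ _ _ h1, wt1_vB _ _ _ (by omega), if_pos hrs, if_pos hrs]
      ring
    · have hdp : dp r s (2*q+1) = q+1 := by unfold dp; rw [if_neg hpar, if_neg hrs]; omega
      rw [hdp]
      have h4 : 2*q+1 - (q+1) = q := by omega
      rw [h4]
      rw [hdp] at h1 h2
      rw [wt1_vA _ _ _ h1, wt1_vB _ _ _ (by omega), if_neg hrs, if_neg hrs]
      ring

private lemma sq_ge_one {a b : ℤ} (h : a ≠ b) : 1 ≤ (a-b)^2 := by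
  have h' : a - b ≠ 0 := sub_ne_zero.mpr h
  rcases h'.lt_or_gt with h'' | h'' <;> nlinarith

/-- strict domination: non-designated A-terms. -/
lemma strictA (r s k p : ℕ) (hk2r : k ≤ 2*r+1) (hk2s : k ≤ 2*s+1) (hkrs : k ≤ r+s)
    (hp : p ≤ k) (hpr : p ≤ r) (hqs : k - p ≤ s) (hne : k % 2 = 0 ∨ p ≠ dp r s k) :
    wt1 r s (vA r s p) + wt1 r s (vB r s (k-p)) > wt1 r s (du r s k) + wt1 r s (dv r s k) := by
  rw [wt_base r s k hk2r hk2s hkrs, wt1_vA _ _ _ hpr, wt1_vB _ _ _ hqs]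
  have hkp : ((k:ℤ) - p) = ((k - p : ℕ) : ℤ) := by omega
  by_cases hrs : r ≤ s <;> by_cases hpar : k % 2 = 0 <;>
    simp only [hrs, hpar, if_true, if_false, ite_true, ite_false] <;> zify <;> rw [← hkp]
  · -- r ≤ s, even : diff = 2(2p-k+1)^2 ≥ 2
    have key : 1 ≤ (2*(p:ℤ)+1 - k)^2 := sq_ge_one (by omega)
    nlinarith [key]
  · -- r ≤ s, odd : p ≠ dp = (k-1)/2, diff = 2(2p-k+1)^2
    have hdp : dp r s k = (k-1)/2 := by unfold dp; rw [if_neg hpar, if_pos hrs]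
    have hne' : p ≠ (k-1)/2 := by rcases hne with h | h; omega; rwa [hdp] at h
    have key : 1 ≤ (2*(p:ℤ)+1 - k)^2 := sq_ge_one (by omega)
    nlinarith [key]
  · -- ¬ r ≤ s, even : diff = 2(2p-k-1)^2 ≥ 2
    have key : 1 ≤ (2*(p:ℤ)-1 - k)^2 := sq_ge_one (by omega)
    nlinarith [key]
  · -- ¬ r ≤ s, odd : p ≠ dp = (k+1)/2, diff = 2(2p-k-1)^2
    have hdp : dp r s k = (k+1)/2 := by unfold dp; rw [if_neg hpar, if_neg hrs]
    have hne' : p ≠ (k+1)/2 := by rcases hne with h | h; omega; rwa [hdp] at h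
    have key : 1 ≤ (2*(p:ℤ)-1 - k)^2 := sq_ge_one (by omega)
    nlinarith [key]

/-- strict domination: non-designated C-terms. -/
lemma strictC (r s k p : ℕ) (hk2r : k ≤ 2*r+1) (hk2s : k ≤ 2*s+1) (hkrs : k ≤ r+s)
    (hp : p ≤ k) (hpr : p ≤ r) (hqs : k - p ≤ s) (hne : k % 2 = 1 ∨ p ≠ dp r s k) :
    wt1 r s (vC r s p) + wt1 r s (vD r s (k-p)) > wt1 r s (du r s k) + wt1 r s (dv r s k) := by
  rw [wt_base r s k hk2r hk2s hkrs, wt1_vC _ _ _ hpr, wt1_vD _ _ _ hqs]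
  have hkp : ((k:ℤ) - p) = ((k - p : ℕ) : ℤ) := by omega
  have key : 1 ≤ (2*(p:ℤ) - k)^2 := by
    by_cases hpar : k % 2 = 0
    · have hdp : dp r s k = k/2 := by unfold dp; rw [if_pos hpar]
      have hne' : p ≠ k/2 := by rcases hne with h | h; omega; rwa [hdp] at h
      exact sq_ge_one (by omega)
    · exact sq_ge_one (by omega)
  zify
  rw [← hkp]
  nlinarith [key]


section Weights
open Finsupp

def dsum {σ : Type} (M : σ →₀ ℕ) : ℕ := M.sum fun _ e => e
def mwt (r s : ℕ) (M : BMVars r s →₀ ℕ) : ℕ := M.sum fun x e => e * wt1 r s x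

lemma dsum_add {σ : Type} (M N : σ →₀ ℕ) : dsum (M + N) = dsum M + dsum N :=
  Finsupp.sum_add_index' (fun _ => rfl) (fun _ _ _ => rfl)
lemma dsum_single {σ : Type} (x : σ) (n : ℕ) : dsum (Finsupp.single x n) = n :=
  Finsupp.sum_single_index rfl
lemma mwt_add (r s : ℕ) (M N : BMVars r s →₀ ℕ) : mwt r s (M + N) = mwt r s M + mwt r s N :=
  Finsupp.sum_add_index' (fun _ => zero_mul _) (fun x b c => add_mul b c _)
lemma mwt_single (r s : ℕ) (x : BMVars r s) (n : ℕ) :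
    mwt r s (Finsupp.single x n) = n * wt1 r s x :=
  Finsupp.sum_single_index (zero_mul _)

def W0 (r s : ℕ) : ℕ := 4*(r+s)*(r+s) + 8*(r+s) + 2

lemma wt1_le (r s : ℕ) (x : BMVars r s) : wt1 r s x ≤ W0 r s := by
  unfold W0
  rcases x with (i | i) | (j | j) <;> simp only [wt1] <;>
    [skip; skip; skip; skip]
  · have hi : i.val ≤ r + s := by have := i.isLt; omega
    split_ifs <;> nlinarith
  · have hi : i.val ≤ r + s := by have := i.isLt; omega
    nlinarith
  · have hj : j.val ≤ r + s := by have := j.isLt; omega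
    split_ifs <;> nlinarith
  · have hj : j.val ≤ r + s := by have := j.isLt; omega
    nlinarith

lemma mwt_le (r s : ℕ) (M : BMVars r s →₀ ℕ) : mwt r s M ≤ W0 r s * dsum M := by
  unfold mwt dsum Finsupp.sum
  rw [Finset.mul_sum]
  apply Finset.sum_le_sum
  intro x _
  calc M x * wt1 r s x ≤ M x * W0 r s := Nat.mul_le_mul_left _ (wt1_le r s x)
    _ = W0 r s * M x := Nat.mul_comm _ _

lemma apply_le_dsum {σ : Type} (M : σ →₀ ℕ) (x : σ) : M x ≤ dsum M := by
  by_cases hx : x ∈ M.support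
  · exact Finset.single_le_sum (fun _ _ => Nat.zero_le _) hx
  · simp [Finsupp.notMem_support_iff.mp hx]

end Weights

section Gen

variable {F : Type} [Field F]

lemma X_mul_X_mul_monomial {σ : Type} (x y : σ) (m : σ →₀ ℕ) :
    (X x * X y * monomial m (1:F) : MvPolynomial σ F)
      = monomial (m + Finsupp.single x 1 + Finsupp.single y 1) 1 := by
  rw [show (X x : MvPolynomial σ F) = monomial (Finsupp.single x 1) 1 from rfl,
      show (X y : MvPolynomial σ F) = monomial (Finsupp.single y 1) 1 from rfl,
      monomial_mul, monomial_mul, one_mul, one_mul]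
  congr 1
  abel

noncomputable def genF (F : Type) [Field F] (r s k : ℕ) : MvPolynomial (BMVars r s) F :=
  ∑ p ∈ Finset.range (k+1),
    ((if p ≤ r ∧ k - p ≤ s then X (vA r s p) * X (vB r s (k-p)) else 0)
     - (if p ≤ r ∧ k - p ≤ s then X (vC r s p) * X (vD r s (k-p)) else 0))

lemma coeff_genPoly (r s n : ℕ) (sel : Fin (n+1) → BMVars r s) (j : ℕ) :
    (genPoly F r s n sel).coeff j
      = if h : j ≤ n then X (sel ⟨j, Nat.lt_succ_of_le h⟩) else 0 := by
  unfold genPoly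
  rw [Polynomial.finset_sum_coeff]
  simp only [Polynomial.coeff_C_mul, Polynomial.coeff_X_pow]
  split
  · next h =>
    rw [Finset.sum_eq_single (⟨j, Nat.lt_succ_of_le h⟩ : Fin (n+1))]
    · simp
    · intro b _ hb
      rw [if_neg, mul_zero]
      intro hh
      exact hb (by ext; simp [← hh])
    · simp
  · next h =>
    apply Finset.sum_eq_zero
    intro b _
    rw [if_neg, mul_zero]
    intro hh
    exact h (hh ▸ b.is_le)

lemma gen_eq (r s k : ℕ) :
    Polynomial.coeff
      (genPoly F r s r (fun i => Sum.inl (Sum.inl i)) *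
        genPoly F r s s (fun i => Sum.inr (Sum.inl i)) -
       genPoly F r s r (fun i => Sum.inl (Sum.inr i)) *
        genPoly F r s s (fun i => Sum.inr (Sum.inr i))) k
    = genF F r s k := by
  rw [Polynomial.coeff_sub, Polynomial.coeff_mul, Polynomial.coeff_mul,
      Finset.Nat.sum_antidiagonal_eq_sum_range_succ_mk,
      Finset.Nat.sum_antidiagonal_eq_sum_range_succ_mk]
  unfold genF
  rw [← Finset.sum_sub_distrib]
  apply Finset.sum_congr rfl
  intro p _
  erw [coeff_genPoly, coeff_genPoly, coeff_genPoly, coeff_genPoly]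
  by_cases h1 : p ≤ r <;> by_cases h2 : k - p ≤ s <;>
    simp [h1, h2, vA, vB, vC, vD, min_eq_left]

end Gen

section Span

variable {F : Type} [Field F]

lemma span_good (r s c : ℕ) (I : Ideal (MvPolynomial (BMVars r s) F))
    (HI : ∀ k, k < c → genF F r s k ∈ I)
    (hc2r : c ≤ 2*r+2) (hc2s : c ≤ 2*s+2) (hcrs : c ≤ r+s+1) (n : ℕ) :
    ∀ (M : BMVars r s →₀ ℕ), dsum M ≤ n →
      Ideal.Quotient.mk I (monomial M 1) ∈ Submodule.span F
        ((fun M' => Ideal.Quotient.mk I (monomial M' (1:F))) ''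
          {M' | dsum M' ≤ n ∧ ∀ k, k < c → M' (du r s k) = 0 ∨ M' (dv r s k) = 0}) := by
  classical
  set SP := Submodule.span F
        ((fun M' => Ideal.Quotient.mk I (monomial M' (1:F))) ''
          {M' | dsum M' ≤ n ∧ ∀ k, k < c → M' (du r s k) = 0 ∨ M' (dv r s k) = 0}) with hSP
  suffices H : ∀ (d : ℕ) (M : BMVars r s →₀ ℕ), W0 r s * n + 1 - mwt r s M ≤ d →
      dsum M ≤ n → Ideal.Quotient.mk I (monomial M 1) ∈ SP by
    intro M hM
    exact H (W0 r s * n + 1) M (by omega) hM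
  intro d
  induction d with
  | zero =>
    intro M hmeas hdeg
    exfalso
    have h1 := mwt_le r s M
    have h2 : W0 r s * dsum M ≤ W0 r s * n := Nat.mul_le_mul_left _ hdeg
    omega
  | succ d ih =>
    intro M hmeas hdeg
    by_cases hg : ∀ k, k < c → M (du r s k) = 0 ∨ M (dv r s k) = 0
    · exact Submodule.subset_span ⟨M, ⟨hdeg, hg⟩, rfl⟩
    push_neg at hg
    obtain ⟨k, hk, hU0, hV0⟩ := hg
    have hk2r : k ≤ 2*r+1 := by omega
    have hk2s : k ≤ 2*s+1 := by omega
    have hkrs : k ≤ r+s := by omega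
    obtain ⟨hdpr, hdps, hdpk⟩ := dp_range r s k hk2r hk2s hkrs
    set U := du r s k with hU
    set V := dv r s k with hV
    have hUV : U ≠ V := du_ne_dv r s k
    have hMU : 1 ≤ M U := Nat.one_le_iff_ne_zero.mpr hU0
    have hMV : 1 ≤ M V := Nat.one_le_iff_ne_zero.mpr hV0
    set M₁ : BMVars r s →₀ ℕ := M - Finsupp.single U 1 - Finsupp.single V 1 with hM₁
    have hMdec : M = M₁ + Finsupp.single U 1 + Finsupp.single V 1 := by
      ext x
      simp only [hM₁, Finsupp.add_apply, Finsupp.tsub_apply, Finsupp.single_apply]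
      split_ifs with h1 h2 h2
      · exact absurd (h1.trans h2.symm) hUV
      · have h1' := hMU; rw [h1] at h1'; omega
      · have h2' := hMV; rw [h2] at h2'; omega
      · omega
    have hmwtM : mwt r s M = mwt r s M₁ + (wt1 r s U + wt1 r s V) := by
      conv_lhs => rw [hMdec]
      rw [mwt_add, mwt_add, mwt_single, mwt_single]
      ring
    have hdsM : dsum M = dsum M₁ + 2 := by
      conv_lhs => rw [hMdec]
      rw [dsum_add, dsum_add, dsum_single, dsum_single]
    have term_mem : ∀ (x y : BMVars r s) (cond : Prop) (inst : Decidable cond),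
        (cond → wt1 r s U + wt1 r s V < wt1 r s x + wt1 r s y) →
        Ideal.Quotient.mk I ((if cond then X x * X y else 0) * monomial M₁ (1:F)) ∈ SP := by
      intro x y cond inst hlt
      split_ifs with hcond
      · rw [X_mul_X_mul_monomial]
        apply ih
        · rw [mwt_add, mwt_add, mwt_single, mwt_single]
          have h1 := hlt hcond
          omega
        · rw [dsum_add, dsum_add, dsum_single, dsum_single]
          omega
      · rw [zero_mul, map_zero]
        exact Submodule.zero_mem _
    -- the two families
    set fA : ℕ → MvPolynomial (BMVars r s) F :=
      fun p => if p ≤ r ∧ k - p ≤ s then X (vA r s p) * X (vB r s (k-p)) else 0 with hfA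
    set fC : ℕ → MvPolynomial (BMVars r s) F :=
      fun p => if p ≤ r ∧ k - p ≤ s then X (vC r s p) * X (vD r s (k-p)) else 0 with hfC
    have hgen : genF F r s k = (∑ p ∈ Finset.range (k+1), fA p) - ∑ p ∈ Finset.range (k+1), fC p := by
      unfold genF
      rw [← Finset.sum_sub_distrib]
    have hmem_dp : dp r s k ∈ Finset.range (k+1) := Finset.mem_range.mpr (by omega)
    have hgoal : Ideal.Quotient.mk I (monomial M (1:F))
        = Ideal.Quotient.mk I ((X U * X V) * monomial M₁ 1) := by
      rw [X_mul_X_mul_monomial]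
      conv_lhs => rw [hMdec]
    have hgen0 : Ideal.Quotient.mk I (genF F r s k * monomial M₁ (1:F)) = 0 :=
      Ideal.Quotient.eq_zero_iff_mem.mpr (Ideal.mul_mem_right _ _ (HI k hk))
    have memA : ∀ (hne : ∀ p, k % 2 = 0 ∨ p ≠ dp r s k) (T : Finset ℕ), T ⊆ Finset.range (k+1) →
        Ideal.Quotient.mk I ((∑ p ∈ T, fA p) * monomial M₁ (1:F)) ∈ SP := by
      intro hne T hT
      rw [Finset.sum_mul, map_sum]
      apply Submodule.sum_mem
      intro p hp
      apply term_mem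
      rintro ⟨h1, h2⟩
      have hpk : p ≤ k := by have := Finset.mem_range.mp (hT hp); omega
      exact strictA r s k p hk2r hk2s hkrs hpk h1 h2 (hne p)
    have memA' : ∀ (T : Finset ℕ), T ⊆ Finset.range (k+1) → (∀ p ∈ T, p ≠ dp r s k) →
        Ideal.Quotient.mk I ((∑ p ∈ T, fA p) * monomial M₁ (1:F)) ∈ SP := by
      intro T hT hTne
      rw [Finset.sum_mul, map_sum]
      apply Submodule.sum_mem
      intro p hp
      apply term_mem
      rintro ⟨h1, h2⟩
      have hpk : p ≤ k := by have := Finset.mem_range.mp (hT hp); omega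
      exact strictA r s k p hk2r hk2s hkrs hpk h1 h2 (Or.inr (hTne p hp))
    have memC : ∀ (T : Finset ℕ), T ⊆ Finset.range (k+1) →
        (∀ p ∈ T, k % 2 = 1 ∨ p ≠ dp r s k) →
        Ideal.Quotient.mk I ((∑ p ∈ T, fC p) * monomial M₁ (1:F)) ∈ SP := by
      intro T hT hTne
      rw [Finset.sum_mul, map_sum]
      apply Submodule.sum_mem
      intro p hp
      apply term_mem
      rintro ⟨h1, h2⟩
      have hpk : p ≤ k := by have := Finset.mem_range.mp (hT hp); omega
      exact strictC r s k p hk2r hk2s hkrs hpk h1 h2 (hTne p hp)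
    by_cases hpar : k % 2 = 0
    · -- designated term is the C-term at dp
      have hUd : U = vC r s (dp r s k) := by rw [hU]; unfold du; rw [if_pos hpar]
      have hVd : V = vD r s (k - dp r s k) := by rw [hV]; unfold dv; rw [if_pos hpar]
      have hfCd : fC (dp r s k) = X U * X V := by
        simp only [hfC]
        rw [hUd, hVd]
        exact if_pos ⟨hdpr, hdps⟩
      have hSC : ∑ p ∈ Finset.range (k+1), fC p
          = (∑ p ∈ (Finset.range (k+1)).erase (dp r s k), fC p) + X U * X V := by
        rw [← hfCd, Finset.sum_erase_add _ _ hmem_dp]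
      have hXUV : (X U * X V : MvPolynomial (BMVars r s) F)
          = (∑ p ∈ Finset.range (k+1), fA p) - genF F r s k
            - ∑ p ∈ (Finset.range (k+1)).erase (dp r s k), fC p := by
        rw [hgen, hSC]; ring
      rw [hgoal, hXUV, sub_mul, sub_mul, map_sub, map_sub, hgen0, sub_zero]
      apply Submodule.sub_mem
      · exact memA (fun p => Or.inl hpar) _ (le_refl _)
      · exact memC _ (Finset.erase_subset _ _) (fun p hp => Or.inr (Finset.ne_of_mem_erase hp))
    · -- designated term is the A-term at dp
      have hpar1 : k % 2 = 1 := by omega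
      have hUd : U = vA r s (dp r s k) := by rw [hU]; unfold du; rw [if_neg hpar]
      have hVd : V = vB r s (k - dp r s k) := by rw [hV]; unfold dv; rw [if_neg hpar]
      have hfAd : fA (dp r s k) = X U * X V := by
        simp only [hfA]
        rw [hUd, hVd]
        exact if_pos ⟨hdpr, hdps⟩
      have hSA : ∑ p ∈ Finset.range (k+1), fA p
          = (∑ p ∈ (Finset.range (k+1)).erase (dp r s k), fA p) + X U * X V := by
        rw [← hfAd, Finset.sum_erase_add _ _ hmem_dp]
      have hXUV : (X U * X V : MvPolynomial (BMVars r s) F)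
          = genF F r s k + (∑ p ∈ Finset.range (k+1), fC p)
            - ∑ p ∈ (Finset.range (k+1)).erase (dp r s k), fA p := by
        rw [hgen, hSA]; ring
      rw [hgoal, hXUV, sub_mul, add_mul, map_sub, map_add, hgen0, zero_add]
      apply Submodule.sub_mem
      · exact memC _ (le_refl _) (fun p hp => Or.inl hpar1)
      · exact memA' _ (Finset.erase_subset _ _) (fun p hp => Finset.ne_of_mem_erase hp)

end Span


section Count
variable (r s : ℕ)

lemma vA_inj {i i' : ℕ} (hi : i ≤ r) (hi' : i' ≤ r) (h : vA r s i = vA r s i') : i = i' := by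
  unfold vA at h
  injection h with h
  injection h with h
  rw [Fin.mk.injEq, min_eq_left hi, min_eq_left hi'] at h
  exact h
lemma vB_inj {j j' : ℕ} (hj : j ≤ s) (hj' : j' ≤ s) (h : vB r s j = vB r s j') : j = j' := by
  unfold vB at h
  injection h with h
  injection h with h
  rw [Fin.mk.injEq, min_eq_left hj, min_eq_left hj'] at h
  exact h
lemma vC_inj {i i' : ℕ} (hi : i ≤ r) (hi' : i' ≤ r) (h : vC r s i = vC r s i') : i = i' := by
  unfold vC at h
  injection h with h
  injection h with h
  rw [Fin.mk.injEq, min_eq_left hi, min_eq_left hi'] at h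
  exact h
lemma vD_inj {j j' : ℕ} (hj : j ≤ s) (hj' : j' ≤ s) (h : vD r s j = vD r s j') : j = j' := by
  unfold vD at h
  injection h with h
  injection h with h
  rw [Fin.mk.injEq, min_eq_left hj, min_eq_left hj'] at h
  exact h

lemma du_inj {k k' : ℕ} (hk2r : k ≤ 2*r+1) (hk2s : k ≤ 2*s+1) (hkrs : k ≤ r+s)
    (hk2r' : k' ≤ 2*r+1) (hk2s' : k' ≤ 2*s+1) (hkrs' : k' ≤ r+s)
    (h : du r s k = du r s k') : k = k' := by
  obtain ⟨h1, h2, h3⟩ := dp_range r s k hk2r hk2s hkrs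
  obtain ⟨h1', h2', h3'⟩ := dp_range r s k' hk2r' hk2s' hkrs'
  unfold du at h
  by_cases p1 : k % 2 = 0 <;> by_cases p2 : k' % 2 = 0
  · rw [if_pos p1, if_pos p2] at h
    have hdp := vC_inj r s h1 h1' h
    unfold dp at hdp
    rw [if_pos p1, if_pos p2] at hdp
    omega
  · rw [if_pos p1, if_neg p2] at h
    exfalso
    unfold vA vC at h
    injection h with h
    injection h
  · rw [if_neg p1, if_pos p2] at h
    exfalso
    unfold vA vC at h
    injection h with h
    injection h
  · rw [if_neg p1, if_neg p2] at h
    have hdp := vA_inj r s h1 h1' h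
    unfold dp at hdp
    rw [if_neg p1, if_neg p2] at hdp
    split_ifs at hdp <;> omega

lemma dv_inj {k k' : ℕ} (hk2r : k ≤ 2*r+1) (hk2s : k ≤ 2*s+1) (hkrs : k ≤ r+s)
    (hk2r' : k' ≤ 2*r+1) (hk2s' : k' ≤ 2*s+1) (hkrs' : k' ≤ r+s)
    (h : dv r s k = dv r s k') : k = k' := by
  obtain ⟨h1, h2, h3⟩ := dp_range r s k hk2r hk2s hkrs
  obtain ⟨h1', h2', h3'⟩ := dp_range r s k' hk2r' hk2s' hkrs'
  unfold dv at h
  by_cases p1 : k % 2 = 0 <;> by_cases p2 : k' % 2 = 0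
  · rw [if_pos p1, if_pos p2] at h
    have hdp := vD_inj r s h2 h2' h
    unfold dp at hdp
    rw [if_pos p1, if_pos p2] at hdp
    omega
  · rw [if_pos p1, if_neg p2] at h
    exfalso
    unfold vB vD at h
    injection h with h
    injection h
  · rw [if_neg p1, if_pos p2] at h
    exfalso
    unfold vB vD at h
    injection h with h
    injection h
  · rw [if_neg p1, if_neg p2] at h
    have hdp := vB_inj r s h2 h2' h
    unfold dp at hdp
    rw [if_neg p1, if_neg p2] at hdp
    split_ifs at hdp <;> omega

lemma du_ne_dv_any (k k' : ℕ) : du r s k ≠ dv r s k' := by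
  unfold du dv
  split_ifs <;> simp [vA, vB, vC, vD] <;> intro h <;> cases h

def duv (r s c : ℕ) (b : Fin c → Bool) (k : Fin c) : BMVars r s :=
  if b k then du r s k.val else dv r s k.val

lemma duv_inj (c : ℕ) (hc2r : c ≤ 2*r+2) (hc2s : c ≤ 2*s+2) (hcrs : c ≤ r+s+1)
    (b : Fin c → Bool) : Function.Injective (duv r s c b) := by
  intro k k' h
  have hklt := k.isLt
  have hklt' := k'.isLt
  have r1 : (k:ℕ) ≤ 2*r+1 := by omega
  have r2 : (k:ℕ) ≤ 2*s+1 := by omega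
  have r3 : (k:ℕ) ≤ r+s := by omega
  have r1' : (k':ℕ) ≤ 2*r+1 := by omega
  have r2' : (k':ℕ) ≤ 2*s+1 := by omega
  have r3' : (k':ℕ) ≤ r+s := by omega
  unfold duv at h
  by_cases hb : b k <;> by_cases hb' : b k' <;>
    simp only [hb, hb', if_true, if_false, ite_true, ite_false] at h
  · exact Fin.ext (du_inj r s r1 r2 r3 r1' r2' r3' h)
  · exact absurd h (du_ne_dv_any r s _ _)
  · exact absurd h.symm (du_ne_dv_any r s _ _)
  · exact Fin.ext (dv_inj r s r1 r2 r3 r1' r2' r3' h)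

lemma good_card (c n : ℕ) (hc2r : c ≤ 2*r+2) (hc2s : c ≤ 2*s+2) (hcrs : c ≤ r+s+1)
    (GF : Finset (BMVars r s →₀ ℕ))
    (hGF : ∀ M ∈ GF, dsum M ≤ n ∧ ∀ k, k < c → M (du r s k) = 0 ∨ M (dv r s k) = 0) :
    GF.card ≤ 2^c * (n+1)^(2*r+2*s+4 - c) := by
  classical
  set Sb : (Fin c → Bool) → Finset (BMVars r s) := fun b => Finset.univ.image (duv r s c b)
    with hSb
  set T : (Fin c → Bool) → Finset (BMVars r s →₀ ℕ) := fun b =>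
    (Finset.univ : Finset ({x : BMVars r s // x ∉ Sb b} → Fin (n+1))).image
      (fun g => Finsupp.equivFunOnFinite.symm
        (fun x => if hx : x ∈ Sb b then 0 else (g ⟨x, hx⟩ : ℕ))) with hT
  have hsub : GF ⊆ (Finset.univ : Finset (Fin c → Bool)).biUnion T := by
    intro M hM
    obtain ⟨hdeg, hgood⟩ := hGF M hM
    rw [Finset.mem_biUnion]
    refine ⟨fun k => decide (M (du r s k.val) = 0), Finset.mem_univ _, ?_⟩
    rw [hT, Finset.mem_image]
    refine ⟨fun x => ⟨M x.1, ?_⟩, Finset.mem_univ _, ?_⟩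
    · have := apply_le_dsum M x.1
      omega
    · ext y
      rw [Finsupp.equivFunOnFinite_symm_apply_apply]
      by_cases hy : y ∈ Sb (fun k => decide (M (du r s k.val) = 0))
      · rw [dif_pos hy]
        rw [hSb] at hy
        simp only [Finset.mem_image, Finset.mem_univ, true_and] at hy
        obtain ⟨k, hk⟩ := hy
        by_cases hMdu : M (du r s (k:ℕ)) = 0
        · have hyd : y = du r s (k:ℕ) := by
            rw [← hk]; unfold duv; rw [if_pos (by simp [hMdu])]
          rw [hyd, hMdu]
        · have hyd : y = dv r s (k:ℕ) := by
            rw [← hk]; unfold duv; rw [if_neg (by simp [hMdu])]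
          have := hgood (k:ℕ) (by omega)
          rw [hyd]
          omega
      · rw [dif_neg hy]
  have hcardsub : ∀ b : Fin c → Bool,
      Fintype.card {x : BMVars r s // x ∉ Sb b} = 2*r+2*s+4 - c := by
    intro b
    rw [Fintype.card_subtype_compl]
    congr 1
    · exact card_BMVars r s
    · rw [Fintype.card_coe, hSb]
      rw [Finset.card_image_of_injective _ (duv_inj r s c hc2r hc2s hcrs b)]
      simp
  have hTcard : ∀ b, (T b).card ≤ (n+1)^(2*r+2*s+4 - c) := by
    intro b
    calc (T b).card ≤ Fintype.card ({x : BMVars r s // x ∉ Sb b} → Fin (n+1)) := by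
          rw [← Finset.card_univ]
          exact Finset.card_image_le
      _ = (n+1) ^ Fintype.card {x : BMVars r s // x ∉ Sb b} := by
          rw [Fintype.card_fun]; simp
      _ = (n+1)^(2*r+2*s+4 - c) := by rw [hcardsub b]
  calc GF.card ≤ ((Finset.univ : Finset (Fin c → Bool)).biUnion T).card := Finset.card_le_card hsub
    _ ≤ ∑ b : Fin c → Bool, (T b).card := Finset.card_biUnion_le
    _ ≤ ∑ _b : Fin c → Bool, (n+1)^(2*r+2*s+4 - c) := Finset.sum_le_sum (fun b _ => hTcard b)
    _ = 2^c * (n+1)^(2*r+2*s+4 - c) := by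
        rw [Finset.sum_const, Finset.card_univ]
        simp [mul_comm]

end Count

section SpanPoly
variable {F : Type} [Field F]

lemma span_good_poly (r s c : ℕ) (I : Ideal (MvPolynomial (BMVars r s) F))
    (HI : ∀ k, k < c → genF F r s k ∈ I)
    (hc2r : c ≤ 2*r+2) (hc2s : c ≤ 2*s+2) (hcrs : c ≤ r+s+1) (n : ℕ)
    (f : MvPolynomial (BMVars r s) F) (hf : f.totalDegree ≤ n) :
    Ideal.Quotient.mk I f ∈ Submodule.span F
        ((fun M' => Ideal.Quotient.mk I (monomial M' (1:F))) ''
          {M' | dsum M' ≤ n ∧ ∀ k, k < c → M' (du r s k) = 0 ∨ M' (dv r s k) = 0}) := by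
  have hf2 : f = ∑ M ∈ f.support, monomial M (MvPolynomial.coeff M f) :=
    (MvPolynomial.support_sum_monomial_coeff f).symm
  rw [hf2, map_sum]
  apply Submodule.sum_mem
  intro M hM
  have h1 : monomial M (MvPolynomial.coeff M f)
      = (MvPolynomial.coeff M f) • monomial M (1:F) := by
    rw [MvPolynomial.smul_monomial, smul_eq_mul, mul_one]
  rw [h1]
  have h2 : Ideal.Quotient.mk I ((MvPolynomial.coeff M f) • monomial M (1:F))
      = (MvPolynomial.coeff M f) • Ideal.Quotient.mk I (monomial M (1:F)) :=
    map_smul (Ideal.Quotient.mkₐ F I) _ _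
  rw [h2]
  exact Submodule.smul_mem _ _
    (span_good r s c I HI hc2r hc2s hcrs n M (le_trans (MvPolynomial.le_totalDegree hM) hf))

end SpanPoly


end Stmt18

/-- Lemma 5.6: inside the affine space of quadruples `(A, C, B, D)` of
polynomials with `deg A, deg C ≤ r` and `deg B, deg D ≤ s` (dimension `2r + 2s + 4`),
the locus `A·B ≡ C·D mod Z^t` has codimension at least `min{2r+2, 2s+2, t}` whenever
`t ≤ r + s + 1`; i.e. the Krull dimension of the coordinate ring of this locus is at most
`2r + 2s + 4 − min{2r+2, 2s+2, t}`. -/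
theorem stmt18 (F : Type) [Field F] (r s t : ℕ) (hr : 1 ≤ r) (hs : 1 ≤ s)
    (ht : t ≤ r + s + 1) :
    ringKrullDim (MvPolynomial (BMVars r s) F ⧸ Ideal.span
        (Set.range fun j : Fin t =>
          Polynomial.coeff
            (genPoly F r s r (fun i => Sum.inl (Sum.inl i)) *
              genPoly F r s s (fun i => Sum.inr (Sum.inl i)) -
             genPoly F r s r (fun i => Sum.inl (Sum.inr i)) *
              genPoly F r s s (fun i => Sum.inr (Sum.inr i))) (j : ℕ)))
      + (min (min (2 * r + 2) (2 * s + 2)) t : ℕ)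
      ≤ ((2 * r + 2 * s + 4 : ℕ) : WithBot (WithTop ℕ)) := by
  classical
  open Stmt18 MvPolynomial in
  set I : Ideal (MvPolynomial (BMVars r s) F) := Ideal.span
        (Set.range fun j : Fin t =>
          Polynomial.coeff
            (genPoly F r s r (fun i => Sum.inl (Sum.inl i)) *
              genPoly F r s s (fun i => Sum.inr (Sum.inl i)) -
             genPoly F r s r (fun i => Sum.inl (Sum.inr i)) *
              genPoly F r s s (fun i => Sum.inr (Sum.inr i))) (j : ℕ)) with hI
  set c : ℕ := min (min (2 * r + 2) (2 * s + 2)) t with hc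
  set N : ℕ := 2*r + 2*s + 4 with hN
  have hc2r : c ≤ 2*r+2 := by omega
  have hc2s : c ≤ 2*s+2 := by omega
  have hct : c ≤ t := by omega
  have hcrs : c ≤ r+s+1 := by omega
  have hcN : c ≤ N := by omega
  have HI : ∀ k, k < c → Stmt18.genF F r s k ∈ I := by
    intro k hk
    rw [hI]
    apply Ideal.subset_span
    exact ⟨⟨k, by omega⟩, Stmt18.gen_eq r s k⟩
  -- every chain of primes in the quotient has length at most N - c
  have key : ∀ p : LTSeries (PrimeSpectrum (MvPolynomial (BMVars r s) F ⧸ I)),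
      p.length ≤ N - c := by
    intro p
    by_contra hlt
    push_neg at hlt
    set l : ℕ := p.length with hl
    set P : Fin (l+1) → Ideal (MvPolynomial (BMVars r s) F ⧸ I) :=
      fun i => (p i).asIdeal with hP
    have hPmono : StrictMono P := fun i j hij =>
      (PrimeSpectrum.asIdeal_lt_asIdeal _ _).mpr (p.strictMono hij)
    haveI hq0prime : (P 0).IsPrime := (p 0).isPrime
    set q0 : Ideal (MvPolynomial (BMVars r s) F ⧸ I) := P 0 with hq0
    haveI : q0.IsPrime := hq0prime
    set A := (MvPolynomial (BMVars r s) F ⧸ I) ⧸ q0 with hA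
    haveI : IsDomain A := Ideal.Quotient.isDomain q0
    have hker : RingHom.ker (Ideal.Quotient.mk q0) = q0 := Ideal.mk_ker
    have hle : ∀ i, q0 ≤ P i := fun i => hPmono.monotone (Fin.zero_le i)
    set Q : Fin (l+1) → Ideal A := fun i => (P i).map (Ideal.Quotient.mk q0) with hQ
    have hcomap : ∀ i, Ideal.comap (Ideal.Quotient.mk q0) (Q i) = P i := by
      intro i
      rw [hQ]
      rw [Ideal.comap_map_of_surjective _ Ideal.Quotient.mk_surjective]
      rw [← RingHom.ker_eq_comap_bot, hker]
      exact sup_eq_left.mpr (hle i)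
    have hQmono : StrictMono Q := by
      intro i j hij
      refine lt_of_le_of_ne (Ideal.map_mono (hPmono.monotone hij.le)) ?_
      intro h
      have := congrArg (Ideal.comap (Ideal.Quotient.mk q0)) h
      rw [hcomap, hcomap] at this
      exact hij.ne (hPmono.injective this)
    have hQprime : ∀ i, (Q i).IsPrime := by
      intro i
      haveI : (P i).IsPrime := (p i).isPrime
      exact Ideal.map_isPrime_of_surjective Ideal.Quotient.mk_surjective
        (by rw [hker]; exact hle i)
    have hQ0 : Q 0 = ⊥ := by
      rw [hQ]
      exact Ideal.map_quotient_self q0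
    obtain ⟨y, hy⟩ := Stmt18.chain_indep (F := F) l A inferInstance inferInstance inferInstance
      Q hQmono hQprime hQ0
    have hm : N - c + 1 ≤ l := by omega
    have hdep' : ¬ Stmt18.Dep F (y ∘ Fin.castLE hm) := by
      rintro ⟨q, hq0', hqe⟩
      refine hy ⟨MvPolynomial.rename (Fin.castLE hm) q, ?_, ?_⟩
      · intro h
        exact hq0' ((map_eq_zero_iff _
          (MvPolynomial.rename_injective _ (Fin.castLE_injective hm))).mp h)
      · rw [MvPolynomial.aeval_rename]
        exact hqe
    -- dependence from the spanning bound
    set ψ : MvPolynomial (BMVars r s) F →ₐ[F] A :=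
      (Ideal.Quotient.mkₐ F q0).comp (Ideal.Quotient.mkₐ F I) with hψdef
    have hψ : Function.Surjective ψ :=
      (Ideal.Quotient.mk_surjective).comp (Ideal.Quotient.mk_surjective)
    have H : ∀ n : ℕ, ∃ G : Finset A, G.card ≤ 2^c * (n+1)^(N - c) ∧
        ∀ f : MvPolynomial (BMVars r s) F, f.totalDegree ≤ n →
          ψ f ∈ Submodule.span F (G : Set A) := by
      intro n
      set GFin : Finset (BMVars r s →₀ ℕ) :=
        ((Finset.univ : Finset (BMVars r s → Fin (n+1))).image
          (fun g => Finsupp.equivFunOnFinite.symm (fun x => (g x : ℕ)))).filter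
          (fun M' => Stmt18.dsum M' ≤ n ∧ ∀ k, k < c →
            M' (Stmt18.du r s k) = 0 ∨ M' (Stmt18.dv r s k) = 0) with hGFin
      have hGoodSub : ∀ M' : BMVars r s →₀ ℕ, Stmt18.dsum M' ≤ n →
          (∀ k, k < c → M' (Stmt18.du r s k) = 0 ∨ M' (Stmt18.dv r s k) = 0) →
          M' ∈ GFin := by
        intro M hd hg
        rw [hGFin, Finset.mem_filter]
        refine ⟨?_, hd, hg⟩
        rw [Finset.mem_image]
        refine ⟨fun x => ⟨M x, ?_⟩, Finset.mem_univ _, ?_⟩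
        · have := Stmt18.apply_le_dsum M x
          omega
        · ext y
          rw [Finsupp.equivFunOnFinite_symm_apply_apply]
      refine ⟨GFin.image (fun M' => ψ (MvPolynomial.monomial M' 1)), ?_, ?_⟩
      · refine Finset.card_image_le.trans ?_
        have := Stmt18.good_card r s c n hc2r hc2s hcrs GFin
          (fun M hM => (Finset.mem_filter.mp hM).2)
        have h5 : N - c = 2*r+2*s+4 - c := by rw [hN]
        rw [h5]
        exact this
      · intro f hf
        have h1 := Stmt18.span_good_poly r s c I HI hc2r hc2s hcrs n f hf
        have h3 := Submodule.mem_map_of_mem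
          (f := (Ideal.Quotient.mkₐ F q0).toLinearMap) h1
        rw [Submodule.map_span] at h3
        have h4 : ψ f = (Ideal.Quotient.mkₐ F q0).toLinearMap (Ideal.Quotient.mk I f) := rfl
        rw [h4]
        refine Submodule.span_mono ?_ h3
        rintro _ ⟨_, ⟨M', hM', rfl⟩, rfl⟩
        rw [Finset.mem_coe, Finset.mem_image]
        exact ⟨M', hGoodSub M' hM'.1 hM'.2, rfl⟩
    have hDep := Stmt18.dep_of_spanning ψ hψ c (N - c) H (y ∘ Fin.castLE hm)
    exact hdep' hDep
  have hdim : ringKrullDim (MvPolynomial (BMVars r s) F ⧸ I)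
      ≤ ((N - c : ℕ) : WithBot ℕ∞) := by
    refine iSup_le ?_
    intro p
    have := key p
    exact_mod_cast this
  calc ringKrullDim (MvPolynomial (BMVars r s) F ⧸ I) + (c : WithBot ℕ∞)
      ≤ ((N - c : ℕ) : WithBot ℕ∞) + (c : ℕ) := add_le_add_left hdim _
    _ = ((N : ℕ) : WithBot ℕ∞) := by
        rw [← Nat.cast_add]
        congr 1
        omega
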